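/- Let Q be a random variable taking values in [0,1] with a density f (with respect to Lebesgue measure), and suppose there exists a ∈ (0,1) such that f is non-decreasing on [0, a]. Then for every u ∈ (0, a] with P(Q < u) > 0, the conditional expected improvement satisfies E[u − Q | Q < u] ≤ u/2. -/
import Mathlib


open MeasureTheory

/-- If `Q` takes values in `[0,1]` and has a density `f` (w.r.t. Lebesgue
measure) that is non-decreasing on `[0, a]` for some `a ∈ (0,1)`, then for every
`u ∈ (0, a]` with `P(Q < u) > 0`, the conditional expected improvement satisfies
`E[u − Q | Q < u] ≤ u/2`. -/
theorem cei_bound_monotone_density {Ω : Type*} [MeasurableSpace Ω] (P : Measure Ω)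
    [IsProbabilityMeasure P] (Q : Ω → ℝ) (hmeas : Measurable Q)
    (hbdd : ∀ ω, Q ω ∈ Set.Icc (0 : ℝ) 1)
    (f : ℝ → ℝ) (hf_nonneg : ∀ x, 0 ≤ f x) (hf_meas : Measurable f)
    (hdensity : Measure.map Q P = volume.withDensity fun x => ENNReal.ofReal (f x))
    (a : ℝ) (ha : a ∈ Set.Ioo (0 : ℝ) 1)
    (hmono : MonotoneOn f (Set.Icc 0 a)) :
    ∀ u : ℝ, 0 < u → u ≤ a → P {ω | Q ω < u} ≠ 0 →
      (∫ ω, (if Q ω < u then u - Q ω else 0) ∂P) / (P {ω | Q ω < u}).toReal ≤ u / 2 := by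
  intro u hu0 hua hPpos
  have hμ := hdensity
  -- measure of Iio v
  have hμIio : ∀ s : Set ℝ, MeasurableSet s →
      P (Q ⁻¹' s) = ∫⁻ x in s, ENNReal.ofReal (f x) ∂volume := by
    intro s hs
    rw [← Measure.map_apply hmeas hs, hμ, withDensity_apply _ hs]
  -- f vanishes a.e. on negatives
  have hzero : ∫⁻ x in Set.Iio (0:ℝ), ENNReal.ofReal (f x) ∂volume = 0 := by
    rw [← hμIio _ measurableSet_Iio]
    have : Q ⁻¹' Set.Iio (0:ℝ) = ∅ := by
      ext ω; simp [not_lt.2 (hbdd ω).1]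
    simp [this]
  have hf0 : ∀ᵐ x ∂volume, x ∈ Set.Iio (0:ℝ) → f x = 0 := by
    have h := (lintegral_eq_zero_iff (hf_meas.ennreal_ofReal)).mp hzero
    rw [Filter.EventuallyEq, ae_restrict_iff' measurableSet_Iio] at h
    filter_upwards [h] with x hx hx'
    have := hx hx'
    simpa [ENNReal.ofReal_eq_zero] using le_antisymm (by simpa using this) (hf_nonneg x)
  have hne0 : ∀ᵐ x : ℝ ∂volume, x ≠ 0 := by
    rw [ae_iff]
    simpa using measure_singleton (0:ℝ)
  -- integrability of f on Ioo 0 u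
  have hlint : ∫⁻ x in Set.Ioo (0:ℝ) u, ENNReal.ofReal (f x) ∂volume ≤ 1 := by
    rw [← hμIio _ measurableSet_Ioo]
    exact prob_le_one
  have hfInt : IntegrableOn f (Set.Ioo (0:ℝ) u) volume := by
    refine ⟨hf_meas.aestronglyMeasurable.restrict, ?_⟩
    rw [hasFiniteIntegral_iff_ofReal (Filter.Eventually.of_forall fun x => hf_nonneg x)]
    exact lt_of_le_of_lt hlint ENNReal.one_lt_top
  -- integrability of weighted versions
  have hbub : ∀ c : ℝ, ∀ᵐ x ∂(volume.restrict (Set.Ioo (0:ℝ) u)), ‖c - x‖ ≤ |c| + u := by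
    intro c
    rw [ae_restrict_iff' measurableSet_Ioo]
    refine Filter.Eventually.of_forall fun x hx => ?_
    have h1 : |c - x| ≤ |c| + |x| := abs_sub c x
    have h2 : |x| ≤ u := by
      rw [abs_of_pos hx.1]; exact hx.2.le
    calc ‖c - x‖ = |c - x| := rfl
      _ ≤ |c| + |x| := h1
      _ ≤ |c| + u := by linarith
  have hInt1 : IntegrableOn (fun x => (u - x) * f x) (Set.Ioo (0:ℝ) u) volume :=
    hfInt.bdd_mul (c := |u| + u)
      ((measurable_const.sub measurable_id).aestronglyMeasurable.restrict) (hbub u)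
  have hInt2 : IntegrableOn (fun x => (u/2 - x) * f x) (Set.Ioo (0:ℝ) u) volume :=
    hfInt.bdd_mul (c := |u/2| + u)
      ((measurable_const.sub measurable_id).aestronglyMeasurable.restrict) (hbub (u/2))
  -- numerator identity
  have hg_meas : Measurable fun x : ℝ => if x < u then u - x else 0 :=
    Measurable.ite measurableSet_Iio (measurable_const.sub measurable_id) measurable_const
  have hnum : (∫ ω, (if Q ω < u then u - Q ω else 0) ∂P)
      = ∫ x in Set.Ioo (0:ℝ) u, (u - x) * f x ∂volume := by
    have h1 : (∫ ω, (if Q ω < u then u - Q ω else 0) ∂P)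
        = ∫ x, (if x < u then u - x else 0) ∂(Measure.map Q P) :=
      (integral_map hmeas.aemeasurable hg_meas.aestronglyMeasurable).symm
    rw [h1, hμ]
    have h2 : (volume.withDensity fun x => ENNReal.ofReal (f x))
        = volume.withDensity fun x => ((f x).toNNReal : ENNReal) := rfl
    rw [h2, integral_withDensity_eq_integral_smul hf_meas.real_toNNReal]
    have h4 : (fun x : ℝ => (f x).toNNReal • (if x < u then u - x else 0))
        =ᵐ[volume] Set.indicator (Set.Ioo (0:ℝ) u) (fun x => (u - x) * f x) := by
      filter_upwards [hf0, hne0] with x hx hx0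
      by_cases hcase : x ∈ Set.Ioo (0:ℝ) u
      · rw [Set.indicator_of_mem hcase]
        simp only [NNReal.smul_def, Real.coe_toNNReal _ (hf_nonneg x), if_pos hcase.2,
          smul_eq_mul]
        ring
      · rw [Set.indicator_of_notMem hcase]
        rcases lt_trichotomy x 0 with h | h | h
        · rw [hx h]; simp
        · exact absurd h hx0
        · have : ¬ x < u := by
            intro hlt; exact hcase ⟨h, hlt⟩
          rw [if_neg this]; simp
    rw [integral_congr_ae h4, integral_indicator measurableSet_Ioo]
  -- denominator identity
  have hden : (P {ω | Q ω < u}).toReal = ∫ x in Set.Ioo (0:ℝ) u, f x ∂volume := by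
    have hset : {ω | Q ω < u} = Q ⁻¹' Set.Iio u := rfl
    rw [hset, hμIio _ measurableSet_Iio]
    have hsplit : (Set.Iio u : Set ℝ) = Set.Iio 0 ∪ Set.Ico 0 u := by
      ext x; simp [Set.mem_Iio, Set.mem_Ico]
      constructor
      · intro h; rcases lt_or_ge x 0 with h' | h'
        · exact Or.inl h'
        · exact Or.inr ⟨h', h⟩
      · rintro (h | ⟨_, h⟩)
        · exact h.trans hu0
        · exact h
    rw [hsplit, lintegral_union measurableSet_Ico (by
      rw [Set.disjoint_left]; intro x hx hx'; exact absurd hx'.1 (not_le.2 hx)), hzero, zero_add]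
    have hIco : ∫⁻ x in Set.Ico (0:ℝ) u, ENNReal.ofReal (f x) ∂volume
        = ∫⁻ x in Set.Ioo (0:ℝ) u, ENNReal.ofReal (f x) ∂volume :=
      (setLIntegral_congr (MeasureTheory.Ioo_ae_eq_Ico (a := (0:ℝ)) (b := u))).symm
    rw [hIco]
    rw [integral_eq_lintegral_of_nonneg_ae
      (Filter.Eventually.of_forall fun x => hf_nonneg x) hf_meas.aestronglyMeasurable.restrict]
  -- positivity of denominator
  have hBpos : 0 < ∫ x in Set.Ioo (0:ℝ) u, f x ∂volume := by
    rw [← hden]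
    exact ENNReal.toReal_pos hPpos (measure_ne_top P _)
  -- key pointwise bound
  have hu2a : u/2 ∈ Set.Icc (0:ℝ) a := ⟨by linarith, by linarith⟩
  have hpt : ∀ x ∈ Set.Ioo (0:ℝ) u, (u/2 - x) * f x ≤ (u/2 - x) * f (u/2) := by
    intro x hx
    have hxIcc : x ∈ Set.Icc (0:ℝ) a := ⟨hx.1.le, hx.2.le.trans hua⟩
    rcases le_or_gt x (u/2) with h | h
    · exact mul_le_mul_of_nonneg_left (hmono hxIcc hu2a h) (by linarith)
    · exact mul_le_mul_of_nonpos_left (hmono hu2a hxIcc h.le) (by linarith)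
  -- RHS is integrable
  have hIntR : IntegrableOn (fun x => (u/2 - x) * f (u/2)) (Set.Ioo (0:ℝ) u) volume :=
    (((continuous_const.sub continuous_id).mul continuous_const).integrableOn_Icc
      (a := (0:ℝ)) (b := u)).mono_set Set.Ioo_subset_Icc_self
  have hkey : ∫ x in Set.Ioo (0:ℝ) u, (u/2 - x) * f x ∂volume ≤ 0 := by
    have hle : ∫ x in Set.Ioo (0:ℝ) u, (u/2 - x) * f x ∂volume
        ≤ ∫ x in Set.Ioo (0:ℝ) u, (u/2 - x) * f (u/2) ∂volume :=
      setIntegral_mono_on hInt2 hIntR measurableSet_Ioo hpt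
    have hzero' : ∫ x in Set.Ioo (0:ℝ) u, (u/2 - x) * f (u/2) ∂volume = 0 := by
      rw [integral_mul_const]
      have : ∫ x in Set.Ioo (0:ℝ) u, (u/2 - x) ∂volume = 0 := by
        rw [← integral_Ioc_eq_integral_Ioo, ← intervalIntegral.integral_of_le hu0.le]
        have hid : (∫ x in (0:ℝ)..u, x) = (u^2 - 0^2)/2 := by
          open intervalIntegral in exact integral_id
        have hiid : IntervalIntegrable (fun x : ℝ => x) volume 0 u :=
          continuous_id.intervalIntegrable 0 u
        have h1 : ∫ x in (0:ℝ)..u, (u/2 - x) = u * (u/2) - (u^2 - 0^2)/2 := by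
          rw [intervalIntegral.integral_sub intervalIntegrable_const hiid]
          rw [intervalIntegral.integral_const, hid]
          simp
        rw [h1]; ring
      rw [this, zero_mul]
    linarith
  -- combine
  have hdiff : ∫ x in Set.Ioo (0:ℝ) u, (u/2 - x) * f x ∂volume
      = (∫ x in Set.Ioo (0:ℝ) u, (u - x) * f x ∂volume)
        - (u/2) * ∫ x in Set.Ioo (0:ℝ) u, f x ∂volume := by
    rw [← integral_const_mul]
    rw [← integral_sub hInt1 (hfInt.const_mul (u/2))]
    apply integral_congr_ae
    refine Filter.Eventually.of_forall fun x => ?_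
    ring
  have hAB : (∫ x in Set.Ioo (0:ℝ) u, (u - x) * f x ∂volume)
      ≤ (u/2) * ∫ x in Set.Ioo (0:ℝ) u, f x ∂volume := by
    linarith [hdiff ▸ hkey]
  rw [hnum, hden, div_le_iff₀ hBpos]
  linarith
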